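/- Let u* : [0, t_f] → [0,1]^N be an integrable function, and define the piecewise-averaged function u^d(t) = (1/Δt) ∫_{(k−1)Δt}^{kΔt} u*(τ) dτ for t ∈ [(k−1)Δt, kΔt), where Δt = t_f/T. Then for every t ∈ [0, t_f], ‖∫_0^t (u^d(τ) − u*(τ)) dτ‖_∞ ≤ Δt. -/

import Mathlib

open MeasureTheory intervalIntegral

/-- For an integrable control `u* : [0,t_f] → [0,1]^N` and its piecewise
interval-average `u^d`, the cumulative difference satisfies
`‖∫_0^t (u^d − u*)‖_∞ ≤ Δt` for all `t ∈ [0, t_f]`. -/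
theorem piecewise_average_cumulative_diff_le_dt
    (N T : ℕ) (hT : 0 < T) (tf : ℝ) (htf : 0 < tf)
    (Δt : ℝ) (hΔt : Δt = tf / T)
    (ustar ud : ℝ → Fin N → ℝ)
    (hbound : ∀ t ∈ Set.Icc (0 : ℝ) tf, ∀ j, ustar t j ∈ Set.Icc (0 : ℝ) 1)
    (hint : ∀ j, IntervalIntegrable (fun τ => ustar τ j) volume 0 tf)
    (hud : ∀ k : ℕ, k < T →
      ∀ t ∈ Set.Ico ((k : ℝ) * Δt) (((k : ℝ) + 1) * Δt), ∀ j,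
        ud t j = (1 / Δt) * ∫ τ in ((k : ℝ) * Δt)..(((k : ℝ) + 1) * Δt), ustar τ j) :
    ∀ t ∈ Set.Icc (0 : ℝ) tf, ∀ j,
      |∫ τ in (0 : ℝ)..t, (ud τ j - ustar τ j)| ≤ Δt := by
  intro t ht j
  have hTpos : (0:ℝ) < T := by exact_mod_cast hT
  have hΔpos : 0 < Δt := by rw [hΔt]; positivity
  have hTΔ : (T : ℝ) * Δt = tf := by rw [hΔt]; field_simp
  -- subinterval integrability of ustar j
  have hints : ∀ a b : ℝ, 0 ≤ a → a ≤ b → b ≤ tf →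
      IntervalIntegrable (fun τ => ustar τ j) volume a b := by
    intro a b ha hab hb
    apply (hint j).mono_set
    apply Set.uIcc_subset_uIcc <;> rw [Set.uIcc_of_le htf.le] <;>
      constructor <;> linarith
  -- the averaged value on block k
  set c : ℕ → ℝ := fun k => (1/Δt) * ∫ τ in ((k:ℝ)*Δt)..(((k:ℝ)+1)*Δt), ustar τ j with hc
  -- facts about a single block
  have piece : ∀ k : ℕ, k < T → ∀ s : ℝ, (k:ℝ)*Δt ≤ s → s ≤ ((k:ℝ)+1)*Δt →
      IntervalIntegrable (fun τ => ud τ j - ustar τ j) volume ((k:ℝ)*Δt) s ∧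
      (∫ τ in ((k:ℝ)*Δt)..s, (ud τ j - ustar τ j))
        = (s - (k:ℝ)*Δt) * c k - ∫ τ in ((k:ℝ)*Δt)..s, ustar τ j := by
    intro k hk s hs1 hs2
    set a := (k:ℝ)*Δt with ha
    set b := ((k:ℝ)+1)*Δt with hb
    have ha0 : 0 ≤ a := by positivity
    have hbtf : b ≤ tf := by
      rw [← hTΔ, hb]
      have : (k:ℝ) + 1 ≤ (T:ℝ) := by exact_mod_cast hk
      nlinarith
    have hstf : s ≤ tf := le_trans hs2 hbtf
    -- ud = c k a.e. on Ι a s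
    have hne : ∀ᵐ x ∂(volume : Measure ℝ), x ≠ b := by
      rw [ae_iff]
      simpa using (measure_singleton b : (volume : Measure ℝ) {b} = 0)
    have hae : ∀ᵐ x ∂(volume : Measure ℝ), x ∈ Set.uIoc a s → ud x j = c k := by
      filter_upwards [hne] with x hx hxI
      rw [Set.uIoc_of_le hs1, Set.mem_Ioc] at hxI
      have hx2 : x ∈ Set.Ico a b :=
        ⟨hxI.1.le, lt_of_le_of_ne (hxI.2.trans hs2) hx⟩
      exact hud k hk x hx2 j
    have haeR : (fun τ => ud τ j) =ᵐ[(volume : Measure ℝ).restrict (Set.uIoc a s)]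
        (fun _ => c k) := by
      rw [Filter.EventuallyEq, ae_restrict_iff' measurableSet_uIoc]
      exact hae
    have hudInt : IntervalIntegrable (fun τ => ud τ j) volume a s :=
      intervalIntegrable_iff.mpr (Integrable.congr (intervalIntegrable_iff.mp
        (intervalIntegrable_const : IntervalIntegrable (fun _ => c k) volume a s)) haeR.symm)
    have hudVal : (∫ τ in a..s, ud τ j) = (s - a) * c k := by
      rw [integral_congr_ae hae, intervalIntegral.integral_const, smul_eq_mul]
    have hustInt : IntervalIntegrable (fun τ => ustar τ j) volume a s :=
      hints a s ha0 hs1 hstf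
    refine ⟨hudInt.sub hustInt, ?_⟩
    rw [integral_sub hudInt hustInt, hudVal]
  -- bounds on integrals of ustar
  have ibound : ∀ aa bb : ℝ, 0 ≤ aa → aa ≤ bb → bb ≤ tf →
      0 ≤ (∫ τ in aa..bb, ustar τ j) ∧ (∫ τ in aa..bb, ustar τ j) ≤ bb - aa := by
    intro aa bb h0 hab hbf
    have hsub : Set.Icc aa bb ⊆ Set.Icc 0 tf := Set.Icc_subset_Icc h0 hbf
    constructor
    · apply intervalIntegral.integral_nonneg hab
      intro u hu; exact (hbound u (hsub hu) j).1
    · have h1 : (∫ τ in aa..bb, ustar τ j) ≤ ∫ _ in aa..bb, (1:ℝ) := by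
        apply intervalIntegral.integral_mono_on hab (hints aa bb h0 hab hbf)
          intervalIntegrable_const
        intro u hu; exact (hbound u (hsub hu) j).2
      simpa using h1
  -- bounds on the average value
  have cbound : ∀ k : ℕ, k < T → 0 ≤ c k ∧ c k ≤ 1 := by
    intro k hk
    have ha0 : (0:ℝ) ≤ (k:ℝ)*Δt := by positivity
    have hab : (k:ℝ)*Δt ≤ ((k:ℝ)+1)*Δt := by nlinarith
    have hbtf : ((k:ℝ)+1)*Δt ≤ tf := by
      rw [← hTΔ]
      have : (k:ℝ) + 1 ≤ (T:ℝ) := by exact_mod_cast hk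
      nlinarith
    obtain ⟨hI1, hI2⟩ := ibound ((k:ℝ)*Δt) (((k:ℝ)+1)*Δt) ha0 hab hbtf
    have hd : ((k:ℝ)+1)*Δt - (k:ℝ)*Δt = Δt := by ring
    rw [hd] at hI2
    constructor
    · exact mul_nonneg (by positivity) hI1
    · have h2 := mul_le_mul_of_nonneg_left hI2 (le_of_lt (one_div_pos.mpr hΔpos))
      have h3 : (1/Δt) * Δt = 1 := by field_simp
      calc c k ≤ (1/Δt) * Δt := h2
        _ = 1 := h3
  -- cumulative integral over full blocks is zero
  have hzero : ∀ k : ℕ, k ≤ T →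
      IntervalIntegrable (fun τ => ud τ j - ustar τ j) volume 0 ((k:ℝ)*Δt) ∧
      (∫ τ in (0:ℝ)..((k:ℝ)*Δt), (ud τ j - ustar τ j)) = 0 := by
    intro k hkT
    induction k with
    | zero => simp
    | succ k ih =>
      have hk : k < T := hkT
      obtain ⟨ih1, ih2⟩ := ih hk.le
      have hcast : (((k:ℕ)+1:ℕ):ℝ) = (k:ℝ)+1 := by push_cast; ring
      have hab : (k:ℝ)*Δt ≤ ((k:ℝ)+1)*Δt := by nlinarith
      obtain ⟨p1, p2⟩ := piece k hk (((k:ℝ)+1)*Δt) hab le_rfl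
      have pz : (∫ τ in ((k:ℝ)*Δt)..(((k:ℝ)+1)*Δt), (ud τ j - ustar τ j)) = 0 := by
        rw [p2]
        have hd : ((k:ℝ)+1)*Δt - (k:ℝ)*Δt = Δt := by ring
        rw [hd, hc]
        field_simp
        ring
      constructor
      · rw [hcast]; exact ih1.trans p1
      · rw [hcast, ← intervalIntegral.integral_add_adjacent_intervals ih1 p1, ih2, pz]
        ring
  -- main argument
  obtain ⟨ht0, httf⟩ := ht
  rcases eq_or_lt_of_le httf with heq | hlt
  · rw [heq, ← hTΔ, (hzero T le_rfl).2]
    simpa using hΔpos.le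
  · set k : ℕ := ⌊t / Δt⌋₊ with hkdef
    have hdiv0 : 0 ≤ t / Δt := by positivity
    have hkT : k < T := by
      rw [hkdef]
      apply Nat.floor_lt hdiv0 |>.mpr
      rw [div_lt_iff₀ hΔpos]
      calc t < tf := hlt
        _ = (T:ℝ) * Δt := hTΔ.symm
    have h1 : (k:ℝ)*Δt ≤ t := by
      have := Nat.floor_le hdiv0
      rw [← hkdef] at this
      calc (k:ℝ)*Δt = Δt * (k:ℝ) := by ring
        _ ≤ Δt * (t/Δt) := by nlinarith
        _ = t := by field_simp
    have h2 : t < ((k:ℝ)+1)*Δt := by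
      have := Nat.lt_floor_add_one (t / Δt)
      rw [← hkdef] at this
      calc t = Δt * (t/Δt) := by field_simp
        _ < Δt * ((k:ℝ)+1) := by nlinarith
        _ = ((k:ℝ)+1)*Δt := by ring
    obtain ⟨ih1, ih2⟩ := hzero k hkT.le
    obtain ⟨p1, p2⟩ := piece k hkT t h1 h2.le
    rw [← intervalIntegral.integral_add_adjacent_intervals ih1 p1, ih2, zero_add, p2]
    have ha0 : (0:ℝ) ≤ (k:ℝ)*Δt := by positivity
    obtain ⟨hI1, hI2⟩ := ibound ((k:ℝ)*Δt) t ha0 h1 httf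
    obtain ⟨hc1, hc2⟩ := cbound k hkT
    have hta : 0 ≤ t - (k:ℝ)*Δt := by linarith
    have htb : t - (k:ℝ)*Δt ≤ Δt := by nlinarith
    rw [abs_le]
    constructor
    · nlinarith
    · nlinarith
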